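/- Let m ∈ ℕ and let B̃_0 < Ã_1 < B̃_1 < ... < Ã_m < B̃_m be real numbers with Ã_j ≠ 0. Define r̃_j = ((B̃_j − Ã_j)/Ã_j) · Π_{i≠j} ((B̃_i − Ã_j)/(Ã_i − Ã_j)). Then the vector z = (r̃_1, ..., r̃_m) solves the linear system Σ_{i=1}^m (Ã_i/(Ã_i − B̃_j)) z_i = −1 for j = 1, ..., m. -/

import Mathlib

open Polynomial Finset

/-- Coefficient extraction from Lagrange interpolation: for `f` of degree `< #s`,
the top possible coefficient is the sum of values divided by nodal weights. -/
lemma coeff_eq_sum_eval_mul_weight {ι : Type*} [DecidableEq ι] (s : Finset ι) (v : ι → ℝ)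
    (hvs : Set.InjOn v s) (f : ℝ[X]) (hf : f.degree < s.card) :
    f.coeff (s.card - 1) = ∑ i ∈ s, f.eval (v i) * ∏ k ∈ s.erase i, (v i - v k)⁻¹ := by
  conv_lhs => rw [Lagrange.eq_interpolate hvs hf]
  rw [Lagrange.interpolate_apply, Polynomial.finset_sum_coeff]
  refine Finset.sum_congr rfl fun i hi => ?_
  rw [Lagrange.basis_eq_prod_sub_inv_mul_nodal_div hi, ← Lagrange.nodal_erase_eq_nodal_div hi]
  have hmono : (Lagrange.nodal (s.erase i) v).Monic := Lagrange.nodal_monic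
  have hdeg : (Lagrange.nodal (s.erase i) v).natDegree = s.card - 1 := by
    rw [Lagrange.natDegree_nodal, Finset.card_erase_of_mem hi]
  rw [Polynomial.coeff_C_mul, Polynomial.coeff_C_mul, ← hdeg, hmono.coeff_natDegree]
  simp [Lagrange.nodalWeight, mul_comm]

/-- from [Kh12]: with interlacing numbers `B̃₀ < Ã₁ < B̃₁ < ⋯ < Ã_m < B̃_m`,
`Ãⱼ ≠ 0`, the vector `z = (r̃₁,…,r̃_m)` with
`r̃ⱼ = ((B̃ⱼ − Ãⱼ)/Ãⱼ)·∏_{i≠j} (B̃ᵢ − Ãⱼ)/(Ãᵢ − Ãⱼ)` solves the linear system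
`∑ᵢ (Ãᵢ/(Ãᵢ − B̃ⱼ)) zᵢ = −1`, `j = 1,…,m`.  Here `A j` is `Ã_{j+1}`, `B j` is `B̃_j`. -/
theorem explicit_solution_linear_system
    (m : ℕ) (A : Fin m → ℝ) (B : Fin (m + 1) → ℝ)
    (hinter : ∀ j : Fin m, B j.castSucc < A j ∧ A j < B j.succ)
    (hA0 : ∀ j, A j ≠ 0)
    (r : Fin m → ℝ)
    (hr : ∀ j, r j = (B j.succ - A j) / A j *
      ∏ i ∈ Finset.univ.erase j, (B i.succ - A j) / (A i - A j)) :
    ∀ j : Fin m, ∑ i, A i / (A i - B j.succ) * r i = -1 := by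
  intro j
  -- basic order facts
  have hBmono : StrictMono B := by
    refine Fin.strictMono_iff_lt_succ.mpr fun i => ?_
    exact (hinter i).1.trans (hinter i).2
  have hAmono : StrictMono A := by
    intro i k hik
    calc A i < B i.succ := (hinter i).2
    _ ≤ B k.castSucc := hBmono.monotone (Fin.succ_le_castSucc_iff.mpr hik)
    _ < A k := (hinter k).1
  have hAinj : Function.Injective A := hAmono.injective
  have hAB : ∀ i k : Fin m, A i ≠ B k.succ := by
    intro i k
    rcases le_or_gt i k with h | h
    · exact ne_of_lt (lt_of_le_of_lt (hAmono.monotone h) (hinter k).2)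
    · exact ne_of_gt (lt_of_le_of_lt (hBmono.monotone (Fin.succ_le_castSucc_iff.mpr h))
        (hinter i).1)
  -- the nodal polynomial with roots `B k.succ`, `k ≠ j`
  set f : ℝ[X] := Lagrange.nodal ((Finset.univ : Finset (Fin m)).erase j) (fun k => B k.succ)
    with hf
  have hm : 0 < m := j.pos
  have hcard : ((Finset.univ : Finset (Fin m)).erase j).card = m - 1 := by
    simp [Finset.card_erase_of_mem]
  have hdegf : f.degree < (Finset.univ : Finset (Fin m)).card := by
    rw [hf, Lagrange.degree_nodal, hcard]
    simp only [Finset.card_univ, Fintype.card_fin]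
    exact_mod_cast Nat.sub_lt hm one_pos
  have hkey := coeff_eq_sum_eval_mul_weight Finset.univ A
    (Function.Injective.injOn hAinj) f hdegf
  have hcoeff : f.coeff ((Finset.univ : Finset (Fin m)).card - 1) = 1 := by
    have : f.natDegree = m - 1 := by rw [hf, Lagrange.natDegree_nodal, hcard]
    have hmon : f.Monic := Lagrange.nodal_monic
    simpa [Finset.card_univ, this] using hmon.coeff_natDegree
  rw [hcoeff] at hkey
  have heval : ∀ i, f.eval (A i) = ∏ k ∈ Finset.univ.erase j, (A i - B k.succ) := by
    intro i; rw [hf, Lagrange.eval_nodal]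
  -- per-term computation
  have hterm : ∀ i : Fin m, A i / (A i - B j.succ) * r i
      = -(f.eval (A i) * ∏ k ∈ Finset.univ.erase i, (A i - A k)⁻¹) := by
    intro i
    rw [hr i, heval i]
    have hflip : ∏ k ∈ Finset.univ.erase i, (B k.succ - A i) / (A k - A i)
        = ∏ k ∈ Finset.univ.erase i, (A i - B k.succ) / (A i - A k) := by
      refine Finset.prod_congr rfl fun k _ => ?_
      rw [← neg_div_neg_eq, neg_sub, neg_sub]
    rw [hflip, Finset.prod_div_distrib]
    set Pj := ∏ k ∈ Finset.univ.erase j, (A i - B k.succ) with hPj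
    set Pi := ∏ k ∈ Finset.univ.erase i, (A i - B k.succ) with hPi
    set Q := ∏ k ∈ Finset.univ.erase i, (A i - A k) with hQ
    have hQinv : ∏ k ∈ Finset.univ.erase i, (A i - A k)⁻¹ = Q⁻¹ := by
      rw [hQ, Finset.prod_inv_distrib]
    rw [hQinv]
    have hQ0 : Q ≠ 0 := by
      rw [hQ]
      refine Finset.prod_ne_zero_iff.mpr fun k hk => sub_ne_zero_of_ne ?_
      exact fun h => (Finset.mem_erase.mp hk).1 (hAinj h.symm)
    have hN : (A i - B j.succ) * Pj = (A i - B i.succ) * Pi := by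
      rw [hPj, hPi,
        Finset.mul_prod_erase Finset.univ (fun k => A i - B k.succ) (Finset.mem_univ j),
        Finset.mul_prod_erase Finset.univ (fun k => A i - B k.succ) (Finset.mem_univ i)]
    have hN2 : (B i.succ - A i) * Pi = -((A i - B j.succ) * Pj) := by linarith [hN]
    have h1 : A i - B j.succ ≠ 0 := sub_ne_zero_of_ne (hAB i j)
    rw [div_mul_div_comm, div_mul_div_comm,
      div_eq_iff (mul_ne_zero h1 (mul_ne_zero (hA0 i) hQ0))]
    field_simp
    linear_combination (A i) * hN
  rw [Finset.sum_congr rfl fun i _ => hterm i, Finset.sum_neg_distrib, ← hkey]
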